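/- Let d ≥ 1, r > d, let K, f ∈ L¹(ℝ^d) with |K(x)| ≲ |x|^{−r} and |f(x)| ≲ ⟨x⟩^{−r}, and suppose lim_{|x|→∞} |x|^r K(x) = K₀ and lim_{|x|→∞} |x|^r f(x) = 0. Then lim_{|x|→∞} |x|^r (K ∗ f)(x) = K₀ ∫_{ℝ^d} f(y) dy. -/

import Mathlib

open MeasureTheory Filter

noncomputable section

/-- **Frank–Lenzmann–Silvestre decay lemma.** Let `d ≥ 1`, `r > d`, let
`K, f ∈ L¹(ℝ^d)` with `|K(x)| ≲ |x|^{−r}` and `|f(x)| ≲ ⟨x⟩^{−r}`, and suppose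
`lim_{|x|→∞} |x|^r K(x) = K₀` and `lim_{|x|→∞} |x|^r f(x) = 0`. Then
`lim_{|x|→∞} |x|^r (K ∗ f)(x) = K₀ ∫ f`. -/
theorem stmt_11 (d : ℕ) (hd : 1 ≤ d) (r : ℝ) (hr : (d : ℝ) < r)
    (K f : EuclideanSpace ℝ (Fin d) → ℝ) (K₀ : ℝ)
    (hKint : Integrable K) (hfint : Integrable f)
    (CK Cf : ℝ)
    (hK : ∀ x : EuclideanSpace ℝ (Fin d), x ≠ 0 → |K x| ≤ CK * ‖x‖ ^ (-r))
    (hf : ∀ x : EuclideanSpace ℝ (Fin d), |f x| ≤ Cf * Real.sqrt (1 + ‖x‖ ^ 2) ^ (-r))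
    (hKlim : Tendsto (fun x : EuclideanSpace ℝ (Fin d) => ‖x‖ ^ r * K x)
      (cocompact _) (nhds K₀))
    (hflim : Tendsto (fun x : EuclideanSpace ℝ (Fin d) => ‖x‖ ^ r * f x)
      (cocompact _) (nhds 0)) :
    Tendsto (fun x : EuclideanSpace ℝ (Fin d) => ‖x‖ ^ r * ∫ y, K (x - y) * f y)
      (cocompact _) (nhds (K₀ * ∫ y, f y)) := by
  have hr0 : (0 : ℝ) < r := lt_of_le_of_lt (Nat.cast_nonneg d) hr
  -- nonnegative constants
  set CK' : ℝ := max CK 0 with hCK'def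
  have hCK'0 : 0 ≤ CK' := le_max_right _ _
  have hK' : ∀ x : (EuclideanSpace ℝ (Fin d)), x ≠ 0 → |K x| ≤ CK' * ‖x‖ ^ (-r) := by
    intro x hx
    refine (hK x hx).trans ?_
    exact mul_le_mul_of_nonneg_right (le_max_left CK 0)
      (Real.rpow_nonneg (norm_nonneg _) _)
  have hCf0 : 0 ≤ Cf := by
    have := (abs_nonneg (f 0)).trans (hf 0)
    simpa using this
  -- f is bounded by Cf
  have hfbdd : ∀ y : (EuclideanSpace ℝ (Fin d)), |f y| ≤ Cf := by
    intro y
    refine (hf y).trans ?_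
    have h1 : (1 : ℝ) ≤ Real.sqrt (1 + ‖y‖ ^ 2) := by
      have := Real.sqrt_le_sqrt (le_add_of_nonneg_right (by positivity) : (1:ℝ) ≤ 1 + ‖y‖ ^ 2)
      simpa using this
    have := Real.rpow_le_one_of_one_le_of_nonpos h1 (neg_nonpos.mpr hr0.le)
    calc Cf * Real.sqrt (1 + ‖y‖ ^ 2) ^ (-r) ≤ Cf * 1 :=
          mul_le_mul_of_nonneg_left this hCf0
      _ = Cf := mul_one _
  -- convolution integrand is integrable
  have hconv : ∀ x : (EuclideanSpace ℝ (Fin d)), Integrable fun y => K (x - y) * f y := by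
    intro x
    have h1 : Integrable (fun y : (EuclideanSpace ℝ (Fin d)) => K (x - y)) := hKint.comp_sub_left x
    have h2 : Integrable (fun y : (EuclideanSpace ℝ (Fin d)) => f y * K (x - y)) :=
      h1.bdd_mul (c := Cf) hfint.aestronglyMeasurable
        (Eventually.of_forall fun y => by simpa [Real.norm_eq_abs] using hfbdd y)
    exact h2.congr (Eventually.of_forall fun y => mul_comm _ _)
  haveI : (cocompact (EuclideanSpace ℝ (Fin d))).IsCountablyGenerated := by
    rw [← Metric.cobounded_eq_cocompact, ← comap_norm_atTop]
    infer_instance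
  have hnorm : Tendsto (fun x : (EuclideanSpace ℝ (Fin d)) => ‖x‖) (cocompact (EuclideanSpace ℝ (Fin d))) atTop :=
    tendsto_norm_cocompact_atTop
  -- rpow cancellation helper
  have hcancel : ∀ a : ℝ, 0 < a → a ^ r * (a / 2) ^ (-r) = 2 ^ r := by
    intro a ha
    have h2 : (0:ℝ) < 2 ^ r := Real.rpow_pos_of_pos two_pos r
    have har : (0:ℝ) < a ^ r := Real.rpow_pos_of_pos ha r
    rw [Real.rpow_neg (by positivity), Real.div_rpow ha.le (by norm_num), inv_div]
    field_simp
  -- the truncated integrand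
  set F : (EuclideanSpace ℝ (Fin d)) → (EuclideanSpace ℝ (Fin d)) → ℝ := fun x y =>
    Set.indicator (Metric.closedBall (0 : (EuclideanSpace ℝ (Fin d))) (‖x‖ / 2))
      (fun y => ‖x‖ ^ r * (K (x - y) * f y)) y with hFdef
  -- Part A: dominated convergence on the ball
  have hA : Tendsto (fun x : (EuclideanSpace ℝ (Fin d)) => ∫ y, F x y) (cocompact (EuclideanSpace ℝ (Fin d)))
      (nhds (∫ y, K₀ * f y)) := by
    apply tendsto_integral_filter_of_dominated_convergence
      (bound := fun y => CK' * 2 ^ r * |f y|)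
    · refine Eventually.of_forall fun x => ?_
      exact (((hconv x).const_mul (‖x‖ ^ r)).aestronglyMeasurable).indicator
        measurableSet_closedBall
    · filter_upwards [hnorm.eventually_ge_atTop 1] with x hx1
      refine Eventually.of_forall fun y => ?_
      have hx0 : (0:ℝ) < ‖x‖ := lt_of_lt_of_le one_pos hx1
      by_cases hy : y ∈ Metric.closedBall (0 : (EuclideanSpace ℝ (Fin d))) (‖x‖ / 2)
      · simp only [hFdef]
        rw [Set.indicator_of_mem hy]
        have hyn : ‖y‖ ≤ ‖x‖ / 2 := by
          simpa [Metric.mem_closedBall, dist_zero_right] using hy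
        have hxy : ‖x‖ / 2 ≤ ‖x - y‖ := by
          have := norm_sub_norm_le x y
          linarith [norm_sub_norm_le x y]
        have hxy0 : (0:ℝ) < ‖x - y‖ := lt_of_lt_of_le (by linarith) hxy
        have hKb : |K (x - y)| ≤ CK' * (‖x‖ / 2) ^ (-r) := by
          refine (hK' (x - y) (by simpa [norm_pos_iff] using hxy0)).trans ?_
          exact mul_le_mul_of_nonneg_left
            (Real.rpow_le_rpow_of_nonpos (by linarith) hxy (neg_nonpos.mpr hr0.le)) hCK'0
        have hrx : (0:ℝ) ≤ ‖x‖ ^ r := Real.rpow_nonneg (norm_nonneg _) _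
        calc ‖‖x‖ ^ r * (K (x - y) * f y)‖
            = ‖x‖ ^ r * (|K (x - y)| * |f y|) := by
              rw [Real.norm_eq_abs, abs_mul, abs_mul, abs_of_nonneg hrx]
          _ ≤ ‖x‖ ^ r * ((CK' * (‖x‖ / 2) ^ (-r)) * |f y|) := by
              apply mul_le_mul_of_nonneg_left _ hrx
              exact mul_le_mul_of_nonneg_right hKb (abs_nonneg _)
          _ = (‖x‖ ^ r * (‖x‖ / 2) ^ (-r)) * CK' * |f y| := by ring
          _ = CK' * 2 ^ r * |f y| := by rw [hcancel ‖x‖ hx0]; ring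
      · simp only [hFdef]
        rw [Set.indicator_of_notMem hy]
        simp only [norm_zero]
        positivity
    · exact (hfint.abs).const_mul _
    · refine Eventually.of_forall fun y => ?_
      -- pointwise limit
      have hxy : Tendsto (fun x : (EuclideanSpace ℝ (Fin d)) => x - y) (cocompact (EuclideanSpace ℝ (Fin d))) (cocompact (EuclideanSpace ℝ (Fin d))) :=
        le_of_eq (Homeomorph.subRight y).map_cocompact
      have h1 : Tendsto (fun x : (EuclideanSpace ℝ (Fin d)) => ‖x - y‖ ^ r * K (x - y)) (cocompact (EuclideanSpace ℝ (Fin d)))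
          (nhds K₀) := hKlim.comp hxy
      have hnxy : Tendsto (fun x : (EuclideanSpace ℝ (Fin d)) => ‖x - y‖) (cocompact (EuclideanSpace ℝ (Fin d))) atTop :=
        tendsto_norm_cocompact_atTop.comp hxy
      have hb : Tendsto (fun x : (EuclideanSpace ℝ (Fin d)) => ‖y‖ / ‖x - y‖) (cocompact (EuclideanSpace ℝ (Fin d))) (nhds 0) :=
        tendsto_const_nhds.div_atTop hnxy
      have hz : Tendsto (fun x : (EuclideanSpace ℝ (Fin d)) => ‖x‖ / ‖x - y‖ - 1) (cocompact (EuclideanSpace ℝ (Fin d))) (nhds 0) := by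
        apply squeeze_zero_norm' _ hb
        filter_upwards [hnxy.eventually_ge_atTop 1] with x hx1
        have hpos : (0:ℝ) < ‖x - y‖ := lt_of_lt_of_le one_pos hx1
        rw [Real.norm_eq_abs, show ‖x‖ / ‖x - y‖ - 1 = (‖x‖ - ‖x - y‖) / ‖x - y‖ by
          field_simp, abs_div, abs_of_pos hpos, div_le_div_iff_of_pos_right hpos]
        have := abs_norm_sub_norm_le x (x - y)
        simpa using this
      have h2 : Tendsto (fun x : (EuclideanSpace ℝ (Fin d)) => ‖x‖ / ‖x - y‖) (cocompact (EuclideanSpace ℝ (Fin d))) (nhds 1) := by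
        have := hz.add (tendsto_const_nhds (x := (1:ℝ)))
        simpa using this
      have h3 : Tendsto (fun x : (EuclideanSpace ℝ (Fin d)) => (‖x‖ / ‖x - y‖) ^ r) (cocompact (EuclideanSpace ℝ (Fin d))) (nhds 1) := by
        have := h2.rpow_const (p := r) (Or.inl one_ne_zero)
        simpa using this
      have h4 : Tendsto
          (fun x : (EuclideanSpace ℝ (Fin d)) => (‖x‖ / ‖x - y‖) ^ r * (‖x - y‖ ^ r * K (x - y)) * f y)
          (cocompact (EuclideanSpace ℝ (Fin d))) (nhds (K₀ * f y)) := by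
        have := (h3.mul h1).mul_const (f y)
        simpa using this
      apply h4.congr'
      filter_upwards [hnorm.eventually_ge_atTop (2 * ‖y‖ + 1)] with x hx
      have hyx : ‖y‖ ≤ ‖x‖ / 2 := by linarith
      have hmem : y ∈ Metric.closedBall (0 : (EuclideanSpace ℝ (Fin d))) (‖x‖ / 2) := by
        simpa [Metric.mem_closedBall, dist_zero_right] using hyx
      have hxy0 : (0:ℝ) < ‖x - y‖ := by
        have h6 := norm_sub_norm_le x y
        have h7 := norm_nonneg y
        linarith
      have hxyr : (0:ℝ) < ‖x - y‖ ^ r := Real.rpow_pos_of_pos hxy0 r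
      simp only [hFdef]
      rw [Set.indicator_of_mem hmem, Real.div_rpow (norm_nonneg x) (norm_nonneg _)]
      field_simp
  -- Part B: the tail tends to zero
  have hB : Tendsto (fun x : (EuclideanSpace ℝ (Fin d)) => ‖x‖ ^ r *
      ∫ y in (Metric.closedBall (0 : (EuclideanSpace ℝ (Fin d))) (‖x‖ / 2))ᶜ, K (x - y) * f y)
      (cocompact (EuclideanSpace ℝ (Fin d))) (nhds 0) := by
    rw [NormedAddCommGroup.tendsto_nhds_zero]
    intro ε hε
    set IK : ℝ := ∫ y, |K y| with hIKdef
    have hIK0 : 0 ≤ IK := integral_nonneg fun y => abs_nonneg _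
    have h2r : (0:ℝ) < 2 ^ r := Real.rpow_pos_of_pos two_pos r
    set ε' : ℝ := ε / (2 ^ r * (IK + 1)) with hε'def
    have hε'pos : 0 < ε' := by positivity
    have hev : ∀ᶠ z : (EuclideanSpace ℝ (Fin d)) in cocompact (EuclideanSpace ℝ (Fin d)), |‖z‖ ^ r * f z| < ε' := by
      have := Metric.tendsto_nhds.mp hflim ε' hε'pos
      filter_upwards [this] with z hz
      simpa [Real.dist_eq, abs_mul] using hz
    rw [eventually_iff, mem_cocompact] at hev
    obtain ⟨t, htc, hts⟩ := hev
    obtain ⟨R0, hR0⟩ := (Metric.isBounded_iff_subset_closedBall (0 : (EuclideanSpace ℝ (Fin d)))).mp htc.isBounded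
    set R : ℝ := max R0 1 with hRdef
    have hR1 : (1:ℝ) ≤ R := le_max_right _ _
    have hfR : ∀ z : (EuclideanSpace ℝ (Fin d)), R < ‖z‖ → |f z| ≤ ε' * ‖z‖ ^ (-r) := by
      intro z hz
      have hz0 : (0:ℝ) < ‖z‖ := lt_of_lt_of_le (lt_of_lt_of_le one_pos hR1) hz.le
      have hznot : z ∉ t := by
        intro h
        have := hR0 h
        rw [Metric.mem_closedBall, dist_zero_right] at this
        have : R0 < R0 := lt_of_lt_of_le (lt_of_le_of_lt (le_max_left R0 1) hz) this
        exact lt_irrefl _ this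
      have hzb : |‖z‖ ^ r * f z| < ε' := hts hznot
      have h1 : ‖z‖ ^ r * ‖z‖ ^ (-r) = 1 := by
        rw [← Real.rpow_add hz0]; simp
      have hrz : (0:ℝ) < ‖z‖ ^ r := Real.rpow_pos_of_pos hz0 r
      have hrz' : (0:ℝ) ≤ ‖z‖ ^ (-r) := Real.rpow_nonneg hz0.le _
      calc |f z| = |‖z‖ ^ r * f z| * ‖z‖ ^ (-r) := by
            rw [abs_mul, abs_of_pos hrz]
            rw [mul_comm (‖z‖ ^ r) |f z|, mul_assoc, h1, mul_one]
        _ ≤ ε' * ‖z‖ ^ (-r) := mul_le_mul_of_nonneg_right hzb.le hrz'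
    filter_upwards [hnorm.eventually_gt_atTop (2 * R)] with x hx
    have hxpos : (0:ℝ) < ‖x‖ := lt_of_le_of_lt (by positivity) hx
    have hhalf : R < ‖x‖ / 2 := by linarith
    set s : Set (EuclideanSpace ℝ (Fin d)) := (Metric.closedBall (0 : (EuclideanSpace ℝ (Fin d))) (‖x‖ / 2))ᶜ with hsdef
    have hsm : MeasurableSet s := measurableSet_closedBall.compl
    set c : ℝ := ε' * (‖x‖ / 2) ^ (-r) with hcdef
    have hc0 : 0 ≤ c := by
      apply mul_nonneg hε'pos.le (Real.rpow_nonneg (by positivity) _)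
    have key : ∀ y ∈ s, |K (x - y) * f y| ≤ |K (x - y)| * c := by
      intro y hy
      rw [abs_mul]
      apply mul_le_mul_of_nonneg_left _ (abs_nonneg _)
      have hy' : ‖x‖ / 2 < ‖y‖ := by
        simp only [hsdef, Set.mem_compl_iff, Metric.mem_closedBall,
          dist_zero_right, not_le] at hy
        exact hy
      refine (hfR y (hhalf.trans hy')).trans ?_
      exact mul_le_mul_of_nonneg_left
        (Real.rpow_le_rpow_of_nonpos (by linarith) hy'.le (neg_nonpos.mpr hr0.le))
        hε'pos.le
    have hKx : Integrable (fun y : (EuclideanSpace ℝ (Fin d)) => |K (x - y)|) := (hKint.comp_sub_left x).abs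
    have hint2 : Integrable (fun y : (EuclideanSpace ℝ (Fin d)) => |K (x - y)| * c) := hKx.mul_const c
    have hIKx : (∫ y, |K (x - y)|) = IK := by
      rw [hIKdef]
      exact integral_sub_left_eq_self (fun y => |K y|) volume x
    have hrx : (0:ℝ) ≤ ‖x‖ ^ r := Real.rpow_nonneg (norm_nonneg _) _
    have step : ‖‖x‖ ^ r * ∫ y in s, K (x - y) * f y‖ ≤ ‖x‖ ^ r * (IK * c) := by
      rw [Real.norm_eq_abs, abs_mul, abs_of_nonneg hrx]
      apply mul_le_mul_of_nonneg_left _ hrx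
      calc |∫ y in s, K (x - y) * f y| ≤ ∫ y in s, |K (x - y) * f y| := by
            simpa [Real.norm_eq_abs, abs_mul] using
              norm_integral_le_integral_norm (μ := volume.restrict s)
                (fun y => K (x - y) * f y)
        _ ≤ ∫ y in s, |K (x - y)| * c := by
            apply setIntegral_mono_on _ _ hsm key
            · exact ((hconv x).abs).integrableOn
            · exact hint2.integrableOn
        _ ≤ ∫ y, |K (x - y)| * c :=
            setIntegral_le_integral hint2 (Eventually.of_forall fun y =>
              mul_nonneg (abs_nonneg _) hc0)
        _ = (∫ y, |K (x - y)|) * c := integral_mul_const c _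
        _ = IK * c := by rw [hIKx]
    refine lt_of_le_of_lt step ?_
    have hcomp : ‖x‖ ^ r * (IK * c) = 2 ^ r * ε' * IK := by
      rw [hcdef]
      rw [show ‖x‖ ^ r * (IK * (ε' * (‖x‖ / 2) ^ (-r)))
          = (‖x‖ ^ r * (‖x‖ / 2) ^ (-r)) * ε' * IK by ring, hcancel ‖x‖ hxpos]
    rw [hcomp, hε'def]
    rw [show 2 ^ r * (ε / (2 ^ r * (IK + 1))) * IK = ε * (IK / (IK + 1)) by
      field_simp]
    have hlt : IK / (IK + 1) < 1 := by
      rw [div_lt_one (by linarith)]; linarith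
    calc ε * (IK / (IK + 1)) < ε * 1 := by
          apply mul_lt_mul_of_pos_left hlt hε
      _ = ε := mul_one _
  -- combine
  have hsplit : ∀ x : (EuclideanSpace ℝ (Fin d)), ‖x‖ ^ r * ∫ y, K (x - y) * f y
      = (∫ y, F x y) + ‖x‖ ^ r *
        ∫ y in (Metric.closedBall (0 : (EuclideanSpace ℝ (Fin d))) (‖x‖ / 2))ᶜ, K (x - y) * f y := by
    intro x
    have hadd := integral_add_compl
      (measurableSet_closedBall (x := (0:(EuclideanSpace ℝ (Fin d)))) (ε := ‖x‖ / 2)) (hconv x)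
    have hFx : (∫ y, F x y)
        = ‖x‖ ^ r * ∫ y in Metric.closedBall (0 : (EuclideanSpace ℝ (Fin d))) (‖x‖ / 2), K (x - y) * f y := by
      rw [hFdef]
      rw [integral_indicator measurableSet_closedBall]
      exact integral_const_mul _ _
    rw [hFx, ← mul_add, hadd]
  have hfinal := hA.add hB
  rw [add_zero] at hfinal
  have hint : (∫ y, K₀ * f y) = K₀ * ∫ y, f y := integral_const_mul K₀ f
  rw [hint] at hfinal
  exact hfinal.congr (fun x => (hsplit x).symm)
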